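/- For every real n ≥ e, the function x ↦ x^(n-x) (for x in (0, n]) attains its maximum at some x* with x* ≤ n / ln(n / ln n), and the maximum value is at most (n / ln(n/ln n))^n. -/
import Mathlib

open Real

theorem stmt_4 (n : ℝ) (hn : Real.exp 1 ≤ n)
    (hn' : Real.exp 1 < n / Real.log n)
    (f : ℝ → ℝ) (hf : ∀ y : ℝ, f y = Real.exp ((n - y) * Real.log y)) :
    ∃ x : ℝ, x ∈ Set.Ioc (0 : ℝ) n ∧ IsMaxOn f (Set.Ioc (0 : ℝ) n) x ∧
      x ≤ n / Real.log (n / Real.log n) ∧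
      f x ≤ (n / Real.log (n / Real.log n)) ^ n := by
  have hfe : f = fun y => Real.exp ((n - y) * Real.log y) := funext hf
  subst hfe
  have he1 : (1 : ℝ) < Real.exp 1 := by
    have := Real.exp_lt_exp.2 (show (0:ℝ) < 1 by norm_num)
    simp only [Real.exp_zero] at this
    exact this
  have hn0 : (0 : ℝ) < n := lt_of_lt_of_le (Real.exp_pos 1) hn
  set A := Real.log n with hAdef
  have hA1 : (1 : ℝ) ≤ A := by
    have := Real.log_le_log (Real.exp_pos 1) hn
    simpa using this
  have hA0 : (0 : ℝ) < A := lt_of_lt_of_le one_pos hA1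
  have hnA0 : (0 : ℝ) < n / A := lt_trans (Real.exp_pos 1) hn'
  set B := Real.log (n / A) with hBdef
  have hB1 : (1 : ℝ) < B := by
    have := Real.log_lt_log (Real.exp_pos 1) hn'
    simpa using this
  have hB0 : (0 : ℝ) < B := lt_trans one_pos hB1
  have hBeq : B = A - Real.log A := by
    rw [hBdef, Real.log_div (ne_of_gt hn0) (ne_of_gt hA0)]
  have hBA : B ≤ A := by
    have : (0:ℝ) ≤ Real.log A := Real.log_nonneg hA1
    linarith [hBeq]
  set L := n / B with hLdef
  have hL0 : (0 : ℝ) < L := div_pos hn0 hB0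
  have hLn : L < n := div_lt_self hn0 hB1
  have hL1 : (1 : ℝ) < L := by
    have h1 : n / A ≤ n / B := div_le_div_of_nonneg_left (le_of_lt hn0) hB0 hBA
    calc (1:ℝ) < Real.exp 1 := he1
      _ < n / A := hn'
      _ ≤ L := h1
  have h1n : (1 : ℝ) ≤ n := le_trans (le_of_lt he1) hn
  have hnL : n / L = B := by
    rw [hLdef]; field_simp
  have hlogL : Real.log L = A - Real.log B := by
    rw [hLdef, Real.log_div (ne_of_gt hn0) (ne_of_gt hB0)]
  -- key inequality
  have hkey : n / L - 1 - Real.log L ≤ 0 := by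
    rw [hnL, hlogL]
    have h1 : Real.log B ≤ Real.log A := Real.log_le_log hB0 hBA
    have h2 : Real.log A = A - B := by linarith [hBeq]
    linarith
  -- continuity of g on sets avoiding 0
  have hcont : ∀ s : Set ℝ, (0:ℝ) ∉ s → ContinuousOn (fun y => (n - y) * Real.log y) s := by
    intro s hs
    exact (continuous_const.sub continuous_id).continuousOn.mul
      (Real.continuousOn_log.mono (fun y hy => by
        simp only [Set.mem_compl_iff, Set.mem_singleton_iff]
        intro h; exact hs (h ▸ hy)))
  have hcontf : ∀ s : Set ℝ, (0:ℝ) ∉ s →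
      ContinuousOn (fun y => Real.exp ((n - y) * Real.log y)) s := by
    intro s hs
    exact Real.continuous_exp.comp_continuousOn (hcont s hs)
  have h0Icc : (0:ℝ) ∉ Set.Icc (1:ℝ) n := by
    intro h; exact absurd h.1 (by norm_num)
  obtain ⟨x, hx_mem, hx_max⟩ := (isCompact_Icc (a := (1:ℝ)) (b := n)).exists_isMaxOn
    ⟨1, Set.mem_Icc.2 ⟨le_refl 1, h1n⟩⟩ (hcontf _ h0Icc)
  have hx1 : (1:ℝ) ≤ x := hx_mem.1
  have hxn : x ≤ n := hx_mem.2
  have hx0 : (0:ℝ) < x := lt_of_lt_of_le one_pos hx1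
  -- strict antitone of g on Icc L n
  have hanti : StrictAntiOn (fun y => (n - y) * Real.log y) (Set.Icc L n) := by
    apply strictAntiOn_of_deriv_neg (convex_Icc L n)
    · apply hcont
      intro h
      exact absurd h.1 (not_le.2 hL0)
    · intro y hy
      rw [interior_Icc] at hy
      have hyL : L < y := hy.1
      have hyn : y < n := hy.2
      have hy0 : (0:ℝ) < y := lt_trans hL0 hyL
      have hd : HasDerivAt (fun y => (n - y) * Real.log y)
          ((0 - 1) * Real.log y + (n - y) * y⁻¹) y := by
        exact ((hasDerivAt_const y n).sub (hasDerivAt_id y)).mul (Real.hasDerivAt_log (ne_of_gt hy0))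
      rw [hd.deriv]
      have heq : (0 - 1) * Real.log y + (n - y) * y⁻¹ = n / y - 1 - Real.log y := by
        field_simp
        ring
      rw [heq]
      have h1 : n / y < n / L := div_lt_div_of_pos_left hn0 hL0 hyL
      have h2 : Real.log L < Real.log y := Real.log_lt_log hL0 hyL
      linarith
  -- x ≤ L
  have hxL : x ≤ L := by
    by_contra hcon
    push_neg at hcon
    have hfL : Real.exp ((n - x) * Real.log x) < Real.exp ((n - L) * Real.log L) :=
      Real.exp_lt_exp.2 (hanti ⟨le_refl L, le_of_lt hLn⟩ ⟨le_of_lt hcon, hxn⟩ hcon)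
    have := hx_max (Set.mem_Icc.2 ⟨le_of_lt hL1, le_of_lt hLn⟩)
    simp only [Set.mem_setOf_eq] at this
    exact absurd this (not_le.2 hfL)
  refine ⟨x, ⟨hx0, hxn⟩, ?_, hxL, ?_⟩
  · -- max on Ioc 0 n
    rw [isMaxOn_iff]
    intro y hy
    rcases le_or_gt 1 y with h1y | h1y
    · exact hx_max (Set.mem_Icc.2 ⟨h1y, hy.2⟩)
    · have hy0 : (0:ℝ) < y := hy.1
      have hlog : Real.log y < 0 := Real.log_neg hy0 h1y
      have hny : (0:ℝ) < n - y := by linarith [le_trans (le_of_lt he1) hn]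
      have : (n - y) * Real.log y < 0 := mul_neg_of_pos_of_neg hny hlog
      have h1 : Real.exp ((n - y) * Real.log y) < 1 := by
        calc Real.exp ((n - y) * Real.log y) < Real.exp 0 := Real.exp_lt_exp.2 this
          _ = 1 := Real.exp_zero
      have h2 : (1:ℝ) ≤ Real.exp ((n - x) * Real.log x) := by
        have := hx_max (Set.mem_Icc.2 ⟨le_refl 1, h1n⟩)
        simp only [Set.mem_setOf_eq, Real.log_one, mul_zero, Real.exp_zero] at this
        exact this
      exact le_of_lt (lt_of_lt_of_le h1 h2)
  · -- value bound
    have hlx : (0:ℝ) ≤ Real.log x := Real.log_nonneg hx1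
    have h1 : (n - x) * Real.log x ≤ n * Real.log x :=
      mul_le_mul_of_nonneg_right (by linarith) hlx
    have h2 : n * Real.log x ≤ n * Real.log L :=
      mul_le_mul_of_nonneg_left (Real.log_le_log hx0 hxL) (le_of_lt hn0)
    calc Real.exp ((n - x) * Real.log x) ≤ Real.exp (Real.log L * n) := by
          apply Real.exp_le_exp.2; linarith [h1, h2, mul_comm n (Real.log L)]
      _ = L ^ n := (Real.rpow_def_of_pos hL0 n).symm
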